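/- The usual Tamari lattice on Dyck paths of size n is partitioned by the Type function: the fibers I(v) = {P : Type(P) = v}, over all 2^{n−1} words v in {N,E}^{n−1}, are intervals of the Tamari lattice. -/

import Mathlib

/-- A Dyck word: `true` is an up step `u`, `false` is a down step `d`. -/
def IsDyck (w : List Bool) : Prop :=
  w.count true = w.count false ∧ ∀ k, (w.take k).count false ≤ (w.take k).count true

/-- Position (0-based index) of the `i`-th (1-based) up step of `w`. -/
noncomputable def upPos (w : List Bool) (i : ℕ) : ℕ :=
  sInf {j | w.getD j false = true ∧ (w.take (j + 1)).count true = i}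

/-- Position of the down step matching the up step at position `k`:
the first later down step such that the letters strictly in between form a Dyck word. -/
noncomputable def matchIdx (w : List Bool) (k : ℕ) : ℕ :=
  sInf {m | k < m ∧ w.getD m true = false ∧ IsDyck ((w.drop (k + 1)).take (m - (k + 1)))}

/-- The distance function `D_w(i)`: number of letters between the `i`-th up step and its
matching down step, plus one. -/
noncomputable def distFn (w : List Bool) (i : ℕ) : ℕ :=
  matchIdx w (upPos w i) - upPos w i

/-- One rotation step of the Tamari order on Dyck words: a factor `d · B` (with `B` a
nonempty Dyck word) is replaced by `B · d`. -/
def TamariStep (P Q : List Bool) : Prop :=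
  ∃ A B C : List Bool, IsDyck B ∧ B ≠ [] ∧
    P = A ++ false :: (B ++ C) ∧ Q = A ++ (B ++ false :: C)

/-- The Tamari order on Dyck words: reflexive-transitive closure of rotation steps. -/
def TamariLe : List Bool → List Bool → Prop := Relation.ReflTransGen TamariStep
/-- The type of a Dyck word `w` of size `n`: the word of length `n - 1` over `{N, E}`
(encoded with `true = E`, `false = N`) whose `k`-th letter is `E` iff the letter following
the `k`-th up step of `w` is an up step. -/
noncomputable def typeWord (w : List Bool) : List Bool :=
  (List.range (w.count true - 1)).map (fun k => w.getD (upPos w (k + 1) + 1) false)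

namespace Tam


lemma count_take_le_count (w : List Bool) (b : Bool) (k : ℕ) :
    (w.take k).count b ≤ w.count b := by
  conv_rhs => rw [← List.take_append_drop k w]
  rw [List.count_append]
  exact Nat.le_add_right _ _

lemma count_take_mono (w : List Bool) (b : Bool) {k k' : ℕ} (h : k ≤ k') :
    (w.take k).count b ≤ (w.take k').count b := by
  obtain ⟨m, rfl⟩ := Nat.exists_eq_add_of_le h
  rw [List.take_add]
  simp [List.count_append]

lemma count_take_succ (w : List Bool) (b : Bool) (j : ℕ) :
    (w.take (j + 1)).count b = (w.take j).count b + if w.getD j b = b ∧ j < w.length then 1 else 0 := by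
  by_cases h : j < w.length
  · rw [List.take_succ]
    rw [List.getElem?_eq_getElem h]
    simp only [Option.toList_some, List.count_append, List.count_singleton]
    rw [List.getD_eq_getElem _ _ h]
    by_cases hb : w[j] = b <;> simp [hb, h]
  · rw [List.take_of_length_le (by omega), List.take_of_length_le (by omega)]
    simp [h]

lemma ct_take_strict {w : List Bool} {j j' : ℕ} (hlt : j < j') (hj' : w.getD j' false = true) :
    (w.take (j + 1)).count true < (w.take (j' + 1)).count true := by
  have hlen : j' < w.length := by
    by_contra h
    rw [List.getD_eq_default _ _ (by omega)] at hj'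
    exact Bool.false_ne_true hj'
  have hj'' : w[j'] = true := by rw [← List.getD_eq_getElem w false hlen]; exact hj'
  have h1 : (w.take (j' + 1)).count true = (w.take j').count true + 1 := by
    rw [count_take_succ]; simp [hj', hj'', hlen]
  have h2 : (w.take (j + 1)).count true ≤ (w.take j').count true :=
    count_take_mono w true (by omega)
  omega

lemma upPos_eq {w : List Bool} {i j : ℕ} (hj : w.getD j false = true)
    (hc : (w.take (j + 1)).count true = i) : upPos w i = j := by
  have hmem : j ∈ {j | w.getD j false = true ∧ (w.take (j + 1)).count true = i} := ⟨hj, hc⟩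
  refine le_antisymm (Nat.sInf_le hmem) (le_csInf ⟨j, hmem⟩ ?_)
  rintro j' ⟨hj', hc'⟩
  by_contra h
  push_neg at h
  have := ct_take_strict h hj
  omega

lemma nth_exists (w : List Bool) (i : ℕ) (h1 : 1 ≤ i) (h2 : i ≤ w.count true) :
    ∃ j, j < w.length ∧ w.getD j false = true ∧ (w.take (j + 1)).count true = i := by
  induction w generalizing i with
  | nil => simp at h2; omega
  | cons x t ih =>
    cases x with
    | true =>
      rcases Nat.eq_or_lt_of_le h1 with h | h
      · exact ⟨0, by simp, by simp, by simp [← h]⟩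
      · obtain ⟨j, hj1, hj2, hj3⟩ := ih (i - 1) (by omega) (by simp at h2 ⊢; omega)
        exact ⟨j + 1, by simpa using hj1, by simpa using hj2,
          by simpa [List.take_succ_cons, hj3] using by omega⟩
    | false =>
      obtain ⟨j, hj1, hj2, hj3⟩ := ih i h1 (by simpa using h2)
      exact ⟨j + 1, by simpa using hj1, by simpa using hj2, by simpa using hj3⟩

lemma upPos_spec (w : List Bool) (i : ℕ) (h1 : 1 ≤ i) (h2 : i ≤ w.count true) :
    upPos w i < w.length ∧ w.getD (upPos w i) false = true ∧
      (w.take (upPos w i + 1)).count true = i := by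
  obtain ⟨j, hj1, hj2, hj3⟩ := nth_exists w i h1 h2
  rw [upPos_eq hj2 hj3]
  exact ⟨hj1, hj2, hj3⟩

lemma upPos_cons_true_one (w : List Bool) : upPos (true :: w) 1 = 0 :=
  upPos_eq (by simp) (by simp)

lemma upPos_cons_true (w : List Bool) {i : ℕ} (h1 : 1 ≤ i) (h2 : i ≤ w.count true) :
    upPos (true :: w) (i + 1) = upPos w i + 1 := by
  obtain ⟨_, hg, hc⟩ := upPos_spec w i h1 h2
  exact upPos_eq (by simpa using hg) (by simp [List.take_succ_cons, hc])

lemma upPos_cons_false (w : List Bool) {i : ℕ} (h1 : 1 ≤ i) (h2 : i ≤ w.count true) :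
    upPos (false :: w) i = upPos w i + 1 := by
  obtain ⟨_, hg, hc⟩ := upPos_spec w i h1 h2
  exact upPos_eq (by simpa using hg) (by simp [List.take_succ_cons, hc])

lemma upPos_append_left (X Y : List Bool) {i : ℕ} (h1 : 1 ≤ i) (h2 : i ≤ X.count true) :
    upPos (X ++ Y) i = upPos X i := by
  obtain ⟨hl, hg, hc⟩ := upPos_spec X i h1 h2
  exact upPos_eq (by rw [List.getD_append _ _ _ _ hl]; exact hg)
    (by rw [List.take_append_of_le_length (by omega)]; exact hc)

lemma upPos_append_right (X Y : List Bool) {i : ℕ} (h1 : 1 ≤ i) (h2 : i ≤ Y.count true) :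
    upPos (X ++ Y) (X.count true + i) = X.length + upPos Y i := by
  obtain ⟨hl, hg, hc⟩ := upPos_spec Y i h1 h2
  refine upPos_eq ?_ ?_
  · rw [List.getD_append_right _ _ _ _ (by omega)]
    simpa using hg
  · have : X.length + upPos Y i + 1 = X.length + (upPos Y i + 1) := by omega
    rw [this, List.take_length_add_append, List.count_append, hc]




lemma length_eq_count_add_count (w : List Bool) :
    w.length = w.count true + w.count false := by
  induction w with
  | nil => simp
  | cons x t ih =>
    cases x <;> simp only [List.length_cons, List.count_cons, ih] <;> simp <;> omega

lemma typeWord_length (w : List Bool) : (typeWord w).length = w.count true - 1 := by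
  simp [typeWord]

lemma typeWord_getD {w : List Bool} {k : ℕ} (hk : k < w.count true - 1) :
    (typeWord w).getD k false = w.getD (upPos w (k + 1) + 1) false := by
  rw [typeWord, List.getD_eq_getElem _ _ (by simpa using hk)]
  simp

lemma typeWord_getD_default {w : List Bool} {k : ℕ} (hk : w.count true - 1 ≤ k) :
    (typeWord w).getD k false = false :=
  List.getD_eq_default _ _ (by simpa [typeWord_length] using hk)

lemma typeWord_cons_true {w : List Bool} (h : 1 ≤ w.count true) :
    typeWord (true :: w) = w.getD 0 false :: typeWord w := by
  have hct : (true :: w).count true = w.count true + 1 := by simp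
  refine List.ext_getElem ?_ ?_
  · simp [typeWord_length, hct]; omega
  · intro k h1 h2
    rw [typeWord_length, hct] at h1
    rw [← List.getD_eq_getElem _ false, ← List.getD_eq_getElem _ false]
    rcases Nat.eq_zero_or_pos k with rfl | hk
    · rw [typeWord_getD (by omega)]
      rw [upPos_cons_true_one]
      simp
    · obtain ⟨k', rfl⟩ : ∃ k', k = k' + 1 := ⟨k - 1, by omega⟩
      rw [typeWord_getD (w := true :: w) (by rw [hct]; omega)]
      rw [List.getD_cons_succ, List.getD_cons_succ,
        typeWord_getD (w := w) (k := k') (by omega)]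
      rw [show k' + 1 + 1 = (k' + 1) + 1 from rfl, upPos_cons_true w (by omega) (by omega)]

lemma typeWord_cons_false (w : List Bool) :
    typeWord (false :: w) = typeWord w := by
  refine List.ext_getElem (by simp [typeWord_length]) ?_
  intro k h1 h2
  rw [typeWord_length] at h1 h2
  simp at h1
  rw [← List.getD_eq_getElem _ false, ← List.getD_eq_getElem _ false]
  rw [typeWord_getD (by simpa using h1), typeWord_getD h2]
  rw [upPos_cons_false w (by omega) (by omega)]
  simp [List.getD_cons_succ]

lemma typeWord_cons_cons {w : List Bool} (h : 1 ≤ w.count true) :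
    typeWord (true :: false :: w) = false :: typeWord w := by
  rw [typeWord_cons_true (by simpa using h)]
  simp [typeWord_cons_false]

lemma count_true_zero_eq_replicate {w : List Bool} (h : w.count true = 0) :
    w = List.replicate w.length false := by
  refine List.eq_replicate_of_mem ?_
  intro b hb
  rcases b with _ | _
  · rfl
  · exact absurd (List.count_pos_iff.mpr hb) (by omega)

lemma typeWord_one {w : List Bool} (h : w.count true ≤ 1) : typeWord w = [] := by
  have : w.count true - 1 = 0 := by omega
  simp [typeWord, this]

/-- head of a Dyck-like word with ballot property is true -/
lemma dyck_head {w : List Bool} (hw : IsDyck w) (hne : w ≠ []) : w.getD 0 false = true := by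
  cases w with
  | nil => exact absurd rfl hne
  | cons x t =>
    cases x with
    | true => rfl
    | false =>
      have := hw.2 1
      simp at this

lemma count_take_eq (w : List Bool) (k : ℕ) (hk : k ≤ w.length) :
    (w.take k).count false = k - (w.take k).count true := by
  have h := length_eq_count_add_count (w.take k)
  rw [List.length_take] at h
  omega

lemma dyck_last {w : List Bool} (hw : IsDyck w) (hne : w ≠ []) :
    w.getD (w.length - 1) false = false := by
  by_contra h
  have hlen : 0 < w.length := List.length_pos_iff.mpr hne
  have hg : w.getD (w.length - 1) false = true := by
    cases hgg : w.getD (w.length - 1) false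
    · exact absurd hgg h
    · rfl
  have h1 : (w.take w.length).count true = (w.take (w.length - 1)).count true + 1 := by
    have heq : w.length = (w.length - 1) + 1 := by omega
    conv_lhs => rw [heq, count_take_succ]
    have : w.getD (w.length - 1) true = true ∧ w.length - 1 < w.length := ⟨by
      rw [List.getD_eq_getElem _ _ (by omega)] at hg ⊢; exact hg, by omega⟩
    rw [if_pos this]
  rw [List.take_length] at h1
  have hb := hw.2 (w.length - 1)
  have hf := count_take_eq w (w.length - 1) (by omega)
  have hlc := length_eq_count_add_count w
  have := hw.1
  omega


/-! ### Step lemmas -/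

lemma dyck_ballot {w : List Bool} (hw : IsDyck w) (k : ℕ) :
    (w.take k).count false ≤ (w.take k).count true := hw.2 k

lemma take_P2 (A X : List Bool) (t : ℕ) :
    (A ++ false :: X).take (A.length + 1 + t) = A ++ false :: X.take t := by
  have h : A ++ false :: X = (A ++ [false]) ++ X := by simp
  have hl : A.length + 1 + t = (A ++ [false]).length + t := by simp
  rw [h, hl, List.take_length_add_append]
  simp

lemma take_Q2 (A B C : List Bool) {t : ℕ} (ht : t ≤ B.length) :
    (A ++ (B ++ false :: C)).take (A.length + t) = A ++ B.take t := by
  rw [List.take_length_add_append, List.take_append_of_le_length ht]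

lemma take_Q3 (A B C : List Bool) (s : ℕ) :
    (A ++ (B ++ false :: C)).take (A.length + B.length + 1 + s) =
      A ++ B ++ false :: C.take s := by
  have hl : A.length + B.length + 1 + s = A.length + (B.length + 1 + s) := by omega
  rw [hl, List.take_length_add_append, take_P2]
  simp

lemma step_count (A B C : List Bool) (b : Bool) :
    (A ++ (B ++ false :: C)).count b = (A ++ false :: (B ++ C)).count b := by
  simp [List.count_append, List.count_cons]
  omega

lemma step_dyck {A B C : List Bool} (hB : IsDyck B) :
    IsDyck (A ++ false :: (B ++ C)) ↔ IsDyck (A ++ (B ++ false :: C)) := by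
  have hcnt : ∀ b, (A ++ (B ++ false :: C)).count b = (A ++ false :: (B ++ C)).count b :=
    step_count A B C
  constructor
  · rintro ⟨h1, h2⟩
    refine ⟨by rw [hcnt, hcnt, h1], ?_⟩
    intro k
    rcases le_or_gt k A.length with hk | hk
    · rw [List.take_append_of_le_length hk]
      have := h2 k
      rwa [List.take_append_of_le_length hk] at this
    · rcases le_or_gt k (A.length + B.length) with hk2 | hk2
      · obtain ⟨t, rfl⟩ : ∃ t, k = A.length + t := ⟨k - A.length, by omega⟩
        rw [take_Q2 A B C (by omega)]
        have hA : (A ++ false :: (B ++ C)).take (A.length + 1 + 0) = A ++ false :: (B ++ C).take 0 :=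
          take_P2 A (B ++ C) 0
        have hPA := h2 (A.length + 1 + 0)
        rw [hA] at hPA
        simp [List.count_append, List.count_cons] at hPA ⊢
        have := hB.2 t
        omega
      · obtain ⟨s, rfl⟩ : ∃ s, k = A.length + B.length + 1 + s := ⟨k - (A.length + B.length + 1), by omega⟩
        rw [take_Q3]
        have hP := h2 (A.length + 1 + (B.length + s))
        rw [take_P2] at hP
        rw [List.take_append, List.take_of_length_le (by simp),
          show B.length + s - B.length = s by omega] at hP
        simp [List.count_append, List.count_cons] at hP ⊢
        omega
  · rintro ⟨h1, h2⟩
    refine ⟨by rw [← hcnt, ← hcnt, h1], ?_⟩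
    intro k
    rcases le_or_gt k A.length with hk | hk
    · rw [List.take_append_of_le_length hk]
      have := h2 k
      rwa [List.take_append_of_le_length hk] at this
    · rcases le_or_gt k (A.length + 1 + B.length) with hk2 | hk2
      · obtain ⟨t, rfl⟩ : ∃ t, k = A.length + 1 + t := ⟨k - (A.length + 1), by omega⟩
        rw [take_P2]
        have htB : t ≤ B.length := by omega
        rw [List.take_append, show t - B.length = 0 by omega,
          List.take_zero, List.append_nil]
        have hQ := h2 (A.length + B.length + 1 + 0)
        rw [take_Q3] at hQ
        simp [List.count_append, List.count_cons] at hQ ⊢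
        have h3 := hB.2 t
        have h4 := hB.1
        omega
      · obtain ⟨s, rfl⟩ : ∃ s, k = A.length + 1 + (B.length + s) := ⟨k - (A.length + 1 + B.length), by omega⟩
        rw [take_P2, List.take_append, List.take_of_length_le (by simp),
          show B.length + s - B.length = s by omega]
        have hQ := h2 (A.length + B.length + 1 + s)
        rw [take_Q3] at hQ
        simp [List.count_append, List.count_cons] at hQ ⊢
        omega

lemma step_typeWord {A B C : List Bool} (hB : IsDyck B) (hBne : B ≠ []) (k : ℕ) :
    ((typeWord (A ++ (B ++ false :: C))).getD k false
        = (typeWord (A ++ false :: (B ++ C))).getD k false) ∨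
      ((typeWord (A ++ false :: (B ++ C))).getD k false = false ∧
        (typeWord (A ++ (B ++ false :: C))).getD k false = true ∧
        k + 1 = A.count true ∧ A.getD (A.length - 1) false = true) := by
  set P := A ++ false :: (B ++ C) with hPdef
  set Q := A ++ (B ++ false :: C) with hQdef
  have hBpos : 1 ≤ B.count true := by
    have hhd := dyck_head hB hBne
    cases B with
    | nil => exact absurd rfl hBne
    | cons x t =>
      simp at hhd
      subst hhd
      simp
  have hctP : P.count true = A.count true + (B.count true + C.count true) := by
    simp [hPdef, List.count_append]
  have hctQ : Q.count true = A.count true + (B.count true + C.count true) := by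
    simp [hQdef, List.count_append]
  by_cases hk : k < A.count true + (B.count true + C.count true) - 1
  · rcases le_or_gt (k + 1) (A.count true) with hiA | hiA
    · -- (k+1)-th up step inside A
      obtain ⟨hjl, hjg, hjc⟩ := upPos_spec A (k + 1) (by omega) hiA
      set j := upPos A (k + 1) with hjdef
      have huP : upPos P (k + 1) = j := upPos_append_left A (false :: (B ++ C)) (by omega) hiA
      have huQ : upPos Q (k + 1) = j := upPos_append_left A (B ++ false :: C) (by omega) hiA
      rw [typeWord_getD (w := Q) (by omega), typeWord_getD (w := P) (by omega), huP, huQ]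
      rcases lt_or_eq_of_le (show j + 1 ≤ A.length by omega) with hjA | hjA
      · left
        rw [hPdef, hQdef, List.getD_append _ _ _ _ hjA, List.getD_append _ _ _ _ hjA]
      · have hiAt : k + 1 = A.count true := by
          rw [← hjc, hjA, List.take_length]
        have hPg : P.getD (j + 1) false = false := by
          rw [hPdef, List.getD_append_right _ _ _ _ (by omega), hjA]
          simp
        have hQg : Q.getD (j + 1) false = true := by
          rw [hQdef, List.getD_append_right _ _ _ _ (by omega), hjA]
          simp
          have := dyck_head hB hBne
          cases B with
          | nil => exact absurd rfl hBne
          | cons x t => simpa using this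
        right
        refine ⟨hPg, hQg, hiAt, ?_⟩
        rw [show A.length - 1 = j from by omega]
        exact hjg
    · rcases le_or_gt (k + 1) (A.count true + B.count true) with hiB | hiB
      · -- inside B
        left
        obtain ⟨jj, hjj⟩ : ∃ jj, k + 1 = A.count true + jj := ⟨k + 1 - A.count true, by omega⟩
        have hj1 : 1 ≤ jj := by omega
        have hj2 : jj ≤ B.count true := by omega
        obtain ⟨hjl, hjg, hjc⟩ := upPos_spec B jj hj1 hj2
        set jb := upPos B jj with hjbdef
        have hjb1 : jb + 1 < B.length := by
          rcases lt_or_eq_of_le (show jb + 1 ≤ B.length by omega) with h | h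
          · exact h
          · exfalso
            have hlast := dyck_last hB hBne
            rw [show B.length - 1 = jb by omega] at hlast
            rw [hlast] at hjg
            exact Bool.false_ne_true hjg
        have hcBC : jj ≤ (B ++ C).count true := by
          rw [List.count_append]; omega
        have hcfBC : jj ≤ (false :: (B ++ C)).count true := by
          simpa using hcBC
        have huP : upPos P (k + 1) = A.length + (jb + 1) := by
          rw [hjj, hPdef]
          rw [upPos_append_right A (false :: (B ++ C)) hj1 hcfBC]
          rw [upPos_cons_false _ hj1 hcBC]
          rw [upPos_append_left B C hj1 hj2]
        have huQ : upPos Q (k + 1) = A.length + jb := by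
          rw [hjj, hQdef]
          rw [upPos_append_right A (B ++ false :: C) hj1 (by rw [List.count_append]; omega)]
          rw [upPos_append_left B (false :: C) hj1 hj2]
        rw [typeWord_getD (w := Q) (by omega), typeWord_getD (w := P) (by omega), huP, huQ]
        have hPg : P.getD (A.length + (jb + 1) + 1) false = B.getD (jb + 1) false := by
          rw [hPdef, List.getD_append_right _ _ _ _ (by omega)]
          rw [show A.length + (jb + 1) + 1 - A.length = (jb + 1) + 1 from by omega]
          rw [List.getD_cons_succ]
          exact List.getD_append _ _ _ _ hjb1
        have hQg : Q.getD (A.length + jb + 1) false = B.getD (jb + 1) false := by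
          rw [hQdef, List.getD_append_right _ _ _ _ (by omega)]
          rw [show A.length + jb + 1 - A.length = jb + 1 from by omega]
          exact List.getD_append _ _ _ _ hjb1
        rw [hPg, hQg]
      · -- inside C
        left
        obtain ⟨jj, hjj⟩ : ∃ jj, k + 1 = A.count true + (B.count true + jj) :=
          ⟨k + 1 - A.count true - B.count true, by omega⟩
        have hj1 : 1 ≤ jj := by omega
        have hj2 : jj ≤ C.count true := by
          have := hctP
          omega
        obtain ⟨hjl, hjg, hjc⟩ := upPos_spec C jj hj1 hj2
        have huP : upPos P (k + 1) = A.length + ((B.length + upPos C jj) + 1) := by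
          rw [hjj, hPdef]
          rw [upPos_append_right A (false :: (B ++ C)) (by omega)
            (by simp [List.count_append]; omega)]
          rw [upPos_cons_false _ (by omega) (by simp [List.count_append]; omega)]
          rw [upPos_append_right B C hj1 hj2]
        have huQ : upPos Q (k + 1) = A.length + (B.length + (upPos C jj + 1)) := by
          rw [hjj, hQdef]
          rw [upPos_append_right A (B ++ false :: C) (by omega)
            (by simp [List.count_append]; omega)]
          rw [upPos_append_right B (false :: C) hj1 (by simpa using hj2)]
          rw [upPos_cons_false _ hj1 hj2]
        rw [typeWord_getD (w := Q) (by omega), typeWord_getD (w := P) (by omega), huP, huQ]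
        have hPg : P.getD (A.length + ((B.length + upPos C jj) + 1) + 1) false
            = C.getD (upPos C jj + 1) false := by
          rw [hPdef, List.getD_append_right _ _ _ _ (by omega)]
          rw [show A.length + ((B.length + upPos C jj) + 1) + 1 - A.length
            = (B.length + upPos C jj + 1) + 1 from by omega]
          rw [List.getD_cons_succ]
          rw [List.getD_append_right _ _ _ _ (by omega)]
          congr 1
          omega
        have hQg : Q.getD (A.length + (B.length + (upPos C jj + 1)) + 1) false
            = C.getD (upPos C jj + 1) false := by
          rw [hQdef, List.getD_append_right _ _ _ _ (by omega)]
          rw [show A.length + (B.length + (upPos C jj + 1)) + 1 - A.length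
            = B.length + (upPos C jj + 2) from by omega]
          rw [List.getD_append_right _ _ _ _ (by omega)]
          rw [show B.length + (upPos C jj + 2) - B.length = upPos C jj + 1 + 1 from by omega]
          rw [List.getD_cons_succ]
        rw [hPg, hQg]
  · left
    rw [typeWord_getD_default (by omega), typeWord_getD_default (by omega)]

/-! ### Measure -/

def mu : List Bool → ℕ
  | [] => 0
  | (x :: w) => (if x then w.length + 1 else 0) + mu w

lemma mu_append (X Y : List Bool) :
    mu (X ++ Y) = mu X + X.count true * Y.length + mu Y := by
  induction X with
  | nil => simp [mu]
  | cons x X' ih =>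
    cases x <;> simp [mu, ih, List.count_cons, List.length_append] <;> ring

lemma mu_le (w : List Bool) : mu w ≤ w.length * w.length := by
  induction w with
  | nil => simp [mu]
  | cons x w' ih =>
    have h : (w'.length + 1) * (w'.length + 1) = w'.length * w'.length + 2 * w'.length + 1 := by
      ring
    cases x <;> simp [mu, h] <;> omega

lemma dyck_ct_pos {B : List Bool} (hB : IsDyck B) (hBne : B ≠ []) : 1 ≤ B.count true := by
  have hhd := dyck_head hB hBne
  cases B with
  | nil => exact absurd rfl hBne
  | cons x t =>
    simp at hhd
    subst hhd
    simp

lemma step_mu {A B C : List Bool} (hB : IsDyck B) (hBne : B ≠ []) :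
    mu (A ++ (B ++ false :: C)) = mu (A ++ false :: (B ++ C)) + B.count true := by
  simp [mu_append, mu, List.count_cons, List.length_append]
  ring

/-! ### Facts about a Tamari step -/

lemma stepDyckIff {P Q : List Bool} (h : TamariStep P Q) : IsDyck P ↔ IsDyck Q := by
  obtain ⟨A, B, C, hB, hBne, rfl, rfl⟩ := h
  exact step_dyck hB

lemma stepCountEq {P Q : List Bool} (h : TamariStep P Q) (b : Bool) :
    Q.count b = P.count b := by
  obtain ⟨A, B, C, hB, hBne, rfl, rfl⟩ := h
  exact step_count A B C b

lemma stepMuLt {P Q : List Bool} (h : TamariStep P Q) : mu P < mu Q := by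
  obtain ⟨A, B, C, hB, hBne, rfl, rfl⟩ := h
  have := step_mu (A := A) (C := C) hB hBne
  have := dyck_ct_pos hB hBne
  omega

lemma stepTwMono {P Q : List Bool} (h : TamariStep P Q) (k : ℕ) :
    (typeWord Q).getD k false = (typeWord P).getD k false ∨
      ((typeWord P).getD k false = false ∧ (typeWord Q).getD k false = true) := by
  obtain ⟨A, B, C, hB, hBne, rfl, rfl⟩ := h
  rcases step_typeWord hB hBne k with h | ⟨h1, h2, _, _⟩
  · exact Or.inl h
  · exact Or.inr ⟨h1, h2⟩

lemma leCountEq {P Q : List Bool} (h : TamariLe P Q) (b : Bool) :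
    Q.count b = P.count b := by
  induction h with
  | refl => rfl
  | tail h1 h2 ih => rw [stepCountEq h2 b, ih]

lemma leTwMono {P Q : List Bool} (h : TamariLe P Q) (k : ℕ)
    (ht : (typeWord P).getD k false = true) : (typeWord Q).getD k false = true := by
  induction h with
  | refl => exact ht
  | tail h1 h2 ih =>
    rcases stepTwMono h2 k with h | ⟨_, h⟩
    · rw [h]; exact ih
    · exact h

/-! ### Constructions -/

def Tail (h : ℕ) (w : List Bool) : Prop :=
  w.count false = w.count true + h ∧ ∀ k, (w.take k).count false ≤ (w.take k).count true + h

lemma isDyck_iff_tail (w : List Bool) : IsDyck w ↔ Tail 0 w := by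
  constructor
  · rintro ⟨h1, h2⟩; exact ⟨by omega, fun k => by have := h2 k; omega⟩
  · rintro ⟨h1, h2⟩; exact ⟨by omega, fun k => by have := h2 k; omega⟩

def mkB : ℕ → List Bool → List Bool
  | h, [] => true :: List.replicate (h + 1) false
  | h, true :: v => true :: mkB (h + 1) v
  | h, false :: v => true :: false :: mkB h v

def mkA : ℕ → List Bool → List Bool
  | h, [] => true :: List.replicate (h + 1) false
  | h, true :: v => true :: mkA (h + 1) v
  | h, false :: v => true :: (List.replicate (h + 1) false ++ mkA 0 v)

lemma mkB_head (h : ℕ) (v : List Bool) : (mkB h v).getD 0 false = true := by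
  match v with
  | [] => rfl
  | true :: v => rfl
  | false :: v => rfl

lemma mkA_head (h : ℕ) (v : List Bool) : (mkA h v).getD 0 false = true := by
  match v with
  | [] => rfl
  | true :: v => rfl
  | false :: v => rfl

lemma mkB_ct (h : ℕ) (v : List Bool) : (mkB h v).count true = v.length + 1 := by
  induction v generalizing h with
  | nil => simp [mkB, List.count_cons, List.count_replicate]
  | cons x v ih =>
    cases x <;> simp [mkB, List.count_cons, ih]

lemma mkA_ct (h : ℕ) (v : List Bool) : (mkA h v).count true = v.length + 1 := by
  induction v generalizing h with
  | nil => simp [mkA, List.count_cons, List.count_replicate]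
  | cons x v ih =>
    cases x <;> simp [mkA, List.count_cons, List.count_append, List.count_replicate, ih]

lemma tail_cons_true {h : ℕ} {w : List Bool} (hw : Tail (h + 1) w) : Tail h (true :: w) := by
  refine ⟨by have := hw.1; simp [List.count_cons]; omega, ?_⟩
  intro k
  cases k with
  | zero => simp
  | succ k =>
    rw [List.take_succ_cons]
    have := hw.2 k
    simp [List.count_cons]
    omega

lemma tail_cons_false {h : ℕ} {w : List Bool} (hw : Tail h w) : Tail (h + 1) (false :: w) := by
  refine ⟨by have := hw.1; simp [List.count_cons]; omega, ?_⟩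
  intro k
  cases k with
  | zero => simp
  | succ k =>
    rw [List.take_succ_cons]
    have := hw.2 k
    simp [List.count_cons]
    omega

lemma tail_of_cons_true {h : ℕ} {w : List Bool} (hw : Tail h (true :: w)) : Tail (h + 1) w := by
  have h1 := hw.1
  simp [List.count_cons] at h1
  refine ⟨by omega, ?_⟩
  intro k
  have := hw.2 (k + 1)
  rw [List.take_succ_cons] at this
  simp [List.count_cons] at this
  omega

lemma tail_of_cons_false {h : ℕ} {w : List Bool} (hw : Tail (h + 1) (false :: w)) : Tail h w := by
  have h1 := hw.1
  simp [List.count_cons] at h1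
  refine ⟨by omega, ?_⟩
  intro k
  have := hw.2 (k + 1)
  rw [List.take_succ_cons] at this
  simp [List.count_cons] at this
  omega

lemma tail_rep_append {j : ℕ} {w : List Bool} (hw : Tail 0 w) :
    Tail j (List.replicate j false ++ w) := by
  refine ⟨by have := hw.1; simp [List.count_append, List.count_replicate]; omega, ?_⟩
  intro k
  rw [List.take_append, List.take_replicate]
  have h2 := hw.2 (k - j)
  simp [List.count_append, List.count_replicate, List.length_replicate]
  omega

lemma tail_of_rep_append {j : ℕ} {w : List Bool} (hw : Tail j (List.replicate j false ++ w)) :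
    Tail 0 w := by
  have h1 := hw.1
  simp [List.count_append, List.count_replicate] at h1
  refine ⟨by omega, ?_⟩
  intro k
  have h2 := hw.2 (j + k)
  rw [List.take_append, List.take_replicate] at h2
  simp only [List.length_replicate, List.count_append, List.count_replicate,
    show min (j + k) j = j from by omega, show j + k - j = k from by omega] at h2
  simp at h2
  simp
  omega

lemma tail_base (h : ℕ) : Tail h (true :: List.replicate (h + 1) false) := by
  refine ⟨by simp [List.count_cons, List.count_replicate]; omega, ?_⟩
  intro k
  cases k with
  | zero => simp
  | succ k =>
    rw [List.take_succ_cons, List.take_replicate]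
    simp [List.count_cons, List.count_replicate]

lemma mkB_tail (h : ℕ) (v : List Bool) : Tail h (mkB h v) := by
  induction v generalizing h with
  | nil => exact tail_base h
  | cons x v ih =>
    cases x with
    | true => exact tail_cons_true (ih (h + 1))
    | false => exact tail_cons_true (tail_cons_false (ih h))

lemma mkA_tail (h : ℕ) (v : List Bool) : Tail h (mkA h v) := by
  induction v generalizing h with
  | nil => exact tail_base h
  | cons x v ih =>
    cases x with
    | true => exact tail_cons_true (ih (h + 1))
    | false => exact tail_cons_true (tail_rep_append (ih 0))

lemma typeWord_rep_append (j : ℕ) (w : List Bool) :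
    typeWord (List.replicate j false ++ w) = typeWord w := by
  induction j with
  | zero => simp
  | succ j ih =>
    rw [List.replicate_succ, List.cons_append, typeWord_cons_false, ih]

lemma mkB_typeWord (h : ℕ) (v : List Bool) : typeWord (mkB h v) = v := by
  induction v generalizing h with
  | nil =>
    refine typeWord_one ?_
    simp [mkB, List.count_cons, List.count_replicate]
  | cons x v ih =>
    cases x with
    | true =>
      show typeWord (true :: mkB (h + 1) v) = _
      rw [typeWord_cons_true (by rw [mkB_ct]; omega), mkB_head, ih (h + 1)]
    | false =>
      show typeWord (true :: false :: mkB h v) = _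
      rw [typeWord_cons_cons (by rw [mkB_ct]; omega), ih h]

lemma mkA_typeWord (h : ℕ) (v : List Bool) : typeWord (mkA h v) = v := by
  induction v generalizing h with
  | nil =>
    refine typeWord_one ?_
    simp [mkA, List.count_cons, List.count_replicate]
  | cons x v ih =>
    cases x with
    | true =>
      show typeWord (true :: mkA (h + 1) v) = _
      rw [typeWord_cons_true (by rw [mkA_ct]; omega), mkA_head, ih (h + 1)]
    | false =>
      show typeWord (true :: (List.replicate (h + 1) false ++ mkA 0 v)) = _
      rw [typeWord_cons_true
        (by simp [List.count_append, List.count_replicate, mkA_ct])]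
      rw [typeWord_rep_append, ih 0, List.getD_append _ _ _ _ (by simp)]
      simp

/-! ### Patterns and uniqueness -/

def DDU (w : List Bool) : Prop :=
  ∃ p, w.getD p false = false ∧ w.getD (p + 1) false = false ∧ w.getD (p + 2) false = true

def Viol (H : ℕ) (w : List Bool) : Prop :=
  ∃ p, w.getD p false = false ∧ w.getD (p + 1) false = true ∧
    (w.take (p + 1)).count false < (w.take (p + 1)).count true + H

lemma ddu_cons {w : List Bool} (x : Bool) (h : DDU w) : DDU (x :: w) := by
  obtain ⟨p, h1, h2, h3⟩ := h
  exact ⟨p + 1, by simpa using h1, by simpa using h2, by simpa using h3⟩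

lemma viol_cons_true {H : ℕ} {w : List Bool} (h : Viol (H + 1) w) : Viol H (true :: w) := by
  obtain ⟨p, h1, h2, h3⟩ := h
  refine ⟨p + 1, by simpa using h1, by simpa using h2, ?_⟩
  rw [List.take_succ_cons]
  simp [List.count_cons]
  omega

lemma viol_cons_false {H : ℕ} {w : List Bool} (h : Viol H w) : Viol (H + 1) (false :: w) := by
  obtain ⟨p, h1, h2, h3⟩ := h
  refine ⟨p + 1, by simpa using h1, by simpa using h2, ?_⟩
  rw [List.take_succ_cons]
  simp [List.count_cons]
  omega

lemma viol_rep {H j : ℕ} {w : List Bool} (h : Viol H w) :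
    Viol (H + j) (List.replicate j false ++ w) := by
  induction j with
  | zero => simpa using h
  | succ j ih =>
    rw [List.replicate_succ, List.cons_append]
    exact viol_cons_false ih

lemma first_true (w : List Bool) (h : 1 ≤ w.count true) :
    ∃ q, w.getD q false = true ∧ ∀ r < q, w.getD r false = false := by
  induction w with
  | nil => simp at h
  | cons x t ih =>
    cases x with
    | true => exact ⟨0, rfl, by omega⟩
    | false =>
      obtain ⟨q, hq1, hq2⟩ := ih (by simpa using h)
      refine ⟨q + 1, by simpa using hq1, ?_⟩
      intro r hr
      cases r with
      | zero => rfl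
      | succ r => simpa using hq2 r (by omega)

lemma drop_first_true {w : List Bool} {q : ℕ} (hq : w.getD q false = true)
    (hall : ∀ r < q, w.getD r false = false) :
    w = List.replicate q false ++ w.drop q := by
  have hql : q < w.length := by
    by_contra hc
    rw [List.getD_eq_default _ _ (by omega)] at hq
    exact Bool.false_ne_true hq
  have htk : w.take q = List.replicate q false := by
    refine List.eq_replicate_iff.mpr ⟨by rw [List.length_take]; omega, ?_⟩
    intro b hb
    obtain ⟨r, hr, hrb⟩ := List.mem_iff_getElem.mp hb
    have hrq : r < q := by
      rw [List.length_take] at hr; omega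
    have hfalse := hall r hrq
    rw [List.getD_eq_getElem _ _ (by omega)] at hfalse
    rw [← hrb, List.getElem_take]
    exact hfalse
  conv_lhs => rw [← List.take_append_drop q w, htk]

lemma uniq_b (v : List Bool) : ∀ (h : ℕ) (S : List Bool), Tail h S →
    S.count true = v.length + 1 → S.getD 0 false = true → typeWord S = v →
    ¬ DDU S → S = mkB h v := by
  induction v with
  | nil =>
    intro h S htail hct hhd _ _
    obtain ⟨x, S', rfl⟩ : ∃ x S', S = x :: S' := by
      cases S with
      | nil => simp at hct
      | cons x S' => exact ⟨x, S', rfl⟩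
    simp at hhd
    subst hhd
    simp [List.count_cons] at hct
    have hrep := count_true_zero_eq_replicate hct
    have hcf : S'.count false = h + 1 := by
      have := htail.1
      simp [List.count_cons, hct] at this
      omega
    have hlen : S'.length = h + 1 := by
      have := length_eq_count_add_count S'
      omega
    rw [mkB, hrep, hlen]
  | cons x v ih =>
    intro h S htail hct hhd htw hddu
    obtain ⟨S2, rfl⟩ : ∃ S2, S = true :: S2 := by
      cases S with
      | nil => simp at hct
      | cons y S2 =>
        simp at hhd
        subst hhd
        exact ⟨S2, rfl⟩
    simp [List.count_cons] at hct
    have hctS2 : S2.count true = v.length + 1 := by simpa using hct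
    have htw2 := htw
    rw [typeWord_cons_true (by omega)] at htw2
    have hhd2 : S2.getD 0 false = x := by
      have := congrArg (fun l => l.getD 0 false) htw2
      simpa using this
    have htwS2 : typeWord S2 = v := by
      have := congrArg List.tail htw2
      simpa using this
    cases x with
    | true =>
      have := ih (h + 1) S2 (tail_of_cons_true htail) hctS2 hhd2 htwS2
        (fun hd => hddu (ddu_cons true hd))
      rw [mkB, this]
    | false =>
      obtain ⟨S3, rfl⟩ : ∃ S3, S2 = false :: S3 := by
        cases S2 with
        | nil => simp at hctS2
        | cons y S3 =>
          simp at hhd2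
          subst hhd2
          exact ⟨S3, rfl⟩
      have hctS3 : S3.count true = v.length + 1 := by simpa using hctS2
      -- S3 must start with true, else DDU
      obtain ⟨q, hq1, hq2⟩ := first_true S3 (by omega)
      have hq0 : q = 0 := by
        by_contra hq0
        refine hddu ⟨q, ?_, ?_, ?_⟩
        · rcases Nat.lt_or_ge q 2 with h2 | h2
          · have hq1' : q = 1 := by omega
            rw [hq1', List.getD_cons_succ, List.getD_cons_zero]
          · rw [show q = (q - 2) + 1 + 1 from by omega, List.getD_cons_succ,
              List.getD_cons_succ]
            exact hq2 (q - 2) (by omega)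
        · rw [show q + 1 = (q - 1) + 1 + 1 from by omega, List.getD_cons_succ,
            List.getD_cons_succ]
          exact hq2 (q - 1) (by omega)
        · rw [show q + 2 = q + 1 + 1 from rfl, List.getD_cons_succ, List.getD_cons_succ]
          exact hq1
      rw [hq0] at hq1
      have htail3 : Tail h S3 := tail_of_cons_false (tail_of_cons_true htail)
      have htw3 : typeWord S3 = v := by
        have := htw
        rw [typeWord_cons_cons (by omega)] at this
        simpa using this
      have := ih h S3 htail3 hctS3 hq1 htw3
        (fun hd => hddu (ddu_cons true (ddu_cons false hd)))
      rw [mkB, this]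

lemma uniq_a (v : List Bool) : ∀ (h : ℕ) (S : List Bool), Tail h S →
    S.count true = v.length + 1 → S.getD 0 false = true → typeWord S = v →
    ¬ Viol h S → S = mkA h v := by
  induction v with
  | nil =>
    intro h S htail hct hhd _ _
    obtain ⟨x, S', rfl⟩ : ∃ x S', S = x :: S' := by
      cases S with
      | nil => simp at hct
      | cons x S' => exact ⟨x, S', rfl⟩
    simp at hhd
    subst hhd
    simp [List.count_cons] at hct
    have hrep := count_true_zero_eq_replicate hct
    have hcf : S'.count false = h + 1 := by
      have := htail.1
      simp [List.count_cons, hct] at this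
      omega
    have hlen : S'.length = h + 1 := by
      have := length_eq_count_add_count S'
      omega
    rw [mkA, hrep, hlen]
  | cons x v ih =>
    intro h S htail hct hhd htw hviol
    obtain ⟨S2, rfl⟩ : ∃ S2, S = true :: S2 := by
      cases S with
      | nil => simp at hct
      | cons y S2 =>
        simp at hhd
        subst hhd
        exact ⟨S2, rfl⟩
    simp [List.count_cons] at hct
    have hctS2 : S2.count true = v.length + 1 := by simpa using hct
    have htw2 := htw
    rw [typeWord_cons_true (by omega)] at htw2
    have hhd2 : S2.getD 0 false = x := by
      have := congrArg (fun l => l.getD 0 false) htw2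
      simpa using this
    have htwS2 : typeWord S2 = v := by
      have := congrArg List.tail htw2
      simpa using this
    cases x with
    | true =>
      have := ih (h + 1) S2 (tail_of_cons_true htail) hctS2 hhd2 htwS2
        (fun hv => hviol (viol_cons_true hv))
      rw [mkA, this]
    | false =>
      obtain ⟨q, hq1, hq2⟩ := first_true S2 (by omega)
      have hS2eq := drop_first_true hq1 hq2
      set S3 := S2.drop q with hS3def
      have hq1pos : 1 ≤ q := by
        rcases Nat.eq_zero_or_pos q with rfl | h
        · rw [hq1] at hhd2; exact absurd hhd2 (by simp)
        · exact h
      have hS3hd : S3.getD 0 false = true := by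
        have := hq1
        rw [hS2eq, List.getD_append_right _ _ _ _ (by simp)] at this
        simpa using this
    -- take q of S2 is all false
      have htkS2 : S2.take q = List.replicate q false := by
        conv_lhs => rw [hS2eq]
        rw [List.take_append_of_le_length (by simp), List.take_replicate]
        simp
      have hcfq : (S2.take q).count false = q ∧ (S2.take q).count true = 0 := by
        rw [htkS2]
        simp [List.count_replicate]
      -- q ≤ h + 1 from the ballot property
      have hqle : q ≤ h + 1 := by
        have := htail.2 (q + 1)
        rw [List.take_succ_cons] at this
        simp [List.count_cons, hcfq.1, hcfq.2] at this
        omega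
      -- q ≥ h + 1, else Viol
      have hqge : h + 1 ≤ q := by
        by_contra hlt
        refine hviol ⟨q, ?_, ?_, ?_⟩
        · rw [show q = (q - 1) + 1 from by omega, List.getD_cons_succ]
          exact hq2 (q - 1) (by omega)
        · rw [List.getD_cons_succ]
          exact hq1
        · rw [List.take_succ_cons]
          simp [List.count_cons, hcfq.1, hcfq.2]
          omega
      have hq : q = h + 1 := by omega
      subst hq
      have htail3 : Tail 0 S3 := by
        have h2 := tail_of_cons_true htail
        rw [hS2eq] at h2
        exact tail_of_rep_append h2
      have hctS3 : S3.count true = v.length + 1 := by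
        have := hctS2
        rw [hS2eq] at this
        simpa [List.count_append, List.count_replicate] using this
      have htwS3 : typeWord S3 = v := by
        have := htwS2
        rw [hS2eq, typeWord_rep_append] at this
        exact this
      have hviol3 : ¬ Viol 0 S3 := by
        intro hv
        refine hviol ?_
        have := viol_rep (j := h + 1) hv
        rw [Nat.zero_add] at this
        rw [← hS2eq] at this
        exact viol_cons_true this
      have := ih 0 S3 htail3 hctS3 hS3hd htwS3 hviol3
      rw [mkA, ← this, ← hS2eq]

/-! ### Moves -/

lemma step_typeWord_eq {A B C : List Bool} (hB : IsDyck B) (hBne : B ≠ [])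
    (hlast : A.getD (A.length - 1) false = false) :
    typeWord (A ++ (B ++ false :: C)) = typeWord (A ++ false :: (B ++ C)) := by
  refine List.ext_getElem ?_ ?_
  · rw [typeWord_length, typeWord_length, step_count A B C true]
  · intro k hk1 hk2
    rw [← List.getD_eq_getElem _ false, ← List.getD_eq_getElem _ false]
    rcases step_typeWord hB hBne k with h | ⟨_, _, _, hA⟩
    · exact h
    · rw [hlast] at hA
      exact absurd hA (by simp)

lemma getD_take {P : List Bool} {n i : ℕ} (h : i < n) (hi : i < P.length) :
    (P.take n).getD i false = P.getD i false := by
  rw [List.getD_eq_getElem _ _ (by rw [List.length_take]; omega),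
    List.getD_eq_getElem _ _ hi, List.getElem_take]

lemma getD_true_lt {P : List Bool} {p : ℕ} (h : P.getD p false = true) : p < P.length := by
  by_contra hc
  rw [List.getD_eq_default _ _ (by omega)] at h
  exact Bool.false_ne_true h

lemma split_at_false {P : List Bool} {p : ℕ} (h : P.getD p false = false)
    (hlt : p < P.length) : P = P.take p ++ false :: P.drop (p + 1) := by
  conv_lhs => rw [← List.take_append_drop p P, List.drop_eq_getElem_cons hlt]
  congr 2
  rw [List.getD_eq_getElem _ _ hlt] at h
  exact h

lemma getD_eq_getD (R : List Bool) {j : ℕ} (hj : j < R.length) (d d' : Bool) :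
    R.getD j d = R.getD j d' := by
  rw [List.getD_eq_getElem _ _ hj, List.getD_eq_getElem _ _ hj]

lemma take_one_of_head {R : List Bool} (h : R.getD 0 false = true) : R.take 1 = [true] := by
  cases R with
  | nil => simp at h
  | cons x t =>
    simp at h
    subst h
    rfl

lemma up_move {P : List Bool} (hP : IsDyck P) {p : ℕ} (h1 : P.getD p false = false)
    (h2 : P.getD (p + 1) false = false) (h3 : P.getD (p + 2) false = true) :
    ∃ Q, TamariStep P Q ∧ IsDyck Q ∧ typeWord Q = typeWord P ∧ mu P < mu Q ∧
      Q.count true = P.count true := by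
  classical
  have hlen : p + 2 < P.length := getD_true_lt h3
  have hsplit : P = P.take (p + 1) ++ false :: P.drop (p + 2) := by
    have := split_at_false h2 (by omega)
    rwa [show p + 1 + 1 = p + 2 from rfl] at this
  set A := P.take (p + 1) with hAdef
  set R := P.drop (p + 2) with hRdef
  have hAlen : A.length = p + 1 := by rw [hAdef, List.length_take]; omega
  have hRlen : 1 ≤ R.length := by rw [hRdef, List.length_drop]; omega
  have hRhd : R.getD 0 false = true := by
    have h3' := h3
    conv_lhs at h3' => rw [hsplit]
    rw [List.getD_append_right _ _ _ _ (by omega),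
      show p + 2 - A.length = 1 from by omega, List.getD_cons_succ] at h3'
    exact h3'
  -- counts
  have hcnt1 : P.count true = A.count true + R.count true := by
    conv_lhs => rw [hsplit]
    simp [List.count_append, List.count_cons]
  have hcnt2 : P.count false = A.count false + 1 + R.count false := by
    conv_lhs => rw [hsplit]
    simp [List.count_append, List.count_cons]
    omega
  have hbal2 := hP.2 (p + 2)
  have hA1 : P.take (p + 2) = A ++ [false] := by
    conv_lhs => rw [hsplit, show p + 2 = A.length + 1 + 0 from by omega, take_P2]
    simp
  rw [hA1] at hbal2
  simp [List.count_append] at hbal2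
  have hctP := hP.1
  have hex : ∃ k, 1 ≤ k ∧ (R.take k).count true ≤ (R.take k).count false :=
    ⟨R.length, hRlen, by rw [List.take_length]; omega⟩
  set k := Nat.find hex with hkdef
  obtain ⟨hk1, hk2⟩ := Nat.find_spec hex
  rw [← hkdef] at hk1 hk2
  have hkle : k ≤ R.length := Nat.find_le ⟨hRlen, by rw [List.take_length]; omega⟩
  have hmin : ∀ m, 1 ≤ m → m < k → (R.take m).count false < (R.take m).count true := by
    intro m hm1 hmk
    have h := Nat.find_min hex hmk
    simp only [not_and, not_le] at h
    exact h hm1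
  have hk2' : 2 ≤ k := by
    by_contra h
    have hk1' : k = 1 := by omega
    rw [hk1'] at hk2
    rw [take_one_of_head hRhd] at hk2
    simp at hk2
  -- balance at k
  have hbalk : (R.take k).count true = (R.take k).count false := by
    have hidx : k - 1 < R.length := by omega
    have e1 := count_take_succ R true (k - 1)
    have e2 := count_take_succ R false (k - 1)
    rw [show k - 1 + 1 = k from by omega] at e1 e2
    have hxx : R.getD (k - 1) true = R.getD (k - 1) false := getD_eq_getD R hidx _ _
    have hprev := hmin (k - 1) (by omega) (by omega)
    cases hx : R.getD (k - 1) false with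
    | true =>
      rw [hx] at hxx
      rw [if_pos ⟨hxx, hidx⟩] at e1
      rw [if_neg (by rw [hx]; simp)] at e2
      omega
    | false =>
      rw [hx] at hxx
      rw [if_neg (by rw [hxx]; simp)] at e1
      rw [if_pos ⟨hx, hidx⟩] at e2
      omega
  set B := R.take k with hBdef
  set C := R.drop k with hCdef
  have hBlen : B.length = k := by rw [hBdef, List.length_take]; omega
  have hBne : B ≠ [] := by
    intro h
    rw [h] at hBlen
    simp at hBlen
    omega
  have hBdyck : IsDyck B := by
    refine ⟨hbalk, ?_⟩
    intro m
    rw [hBdef, List.take_take]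
    rcases le_or_gt k m with h | h
    · rw [min_eq_right h, ← hBdef]
      omega
    · rw [min_eq_left (by omega)]
      rcases Nat.eq_zero_or_pos m with rfl | hm
      · simp
      · have := hmin m hm h
        omega
  have hBC : R = B ++ C := (List.take_append_drop k R).symm
  have hstep : TamariStep P (A ++ (B ++ false :: C)) := by
    refine ⟨A, B, C, hBdyck, hBne, ?_, rfl⟩
    rw [hsplit, hBC]
  have hlast : A.getD (A.length - 1) false = false := by
    rw [hAlen, show p + 1 - 1 = p from rfl, hAdef]
    rw [getD_take (by omega) (by omega)]
    exact h1
  refine ⟨A ++ (B ++ false :: C), hstep, ?_, ?_, ?_, ?_⟩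
  · exact (step_dyck hBdyck).mp (by rw [← hBC, ← hsplit]; exact hP)
  · rw [step_typeWord_eq hBdyck hBne hlast, ← hBC, ← hsplit]
  · have := step_mu (A := A) (C := C) hBdyck hBne
    have h2 := dyck_ct_pos hBdyck hBne
    rw [← hBC, ← hsplit] at this
    omega
  · rw [stepCountEq hstep]

lemma down_move {P : List Bool} (hP : IsDyck P) {p : ℕ} (h1 : P.getD p false = false)
    (h2 : P.getD (p + 1) false = true)
    (h3 : (P.take (p + 1)).count false < (P.take (p + 1)).count true) :
    ∃ P', TamariStep P' P ∧ IsDyck P' ∧ typeWord P' = typeWord P ∧ mu P' < mu P ∧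
      P'.count true = P.count true := by
  classical
  have hlen : p + 1 < P.length := getD_true_lt h2
  have hsplit : P = P.take (p + 1) ++ P.drop (p + 1) := (List.take_append_drop _ P).symm
  set A := P.take (p + 1) with hAdef
  set R := P.drop (p + 1) with hRdef
  have hAlen : A.length = p + 1 := by rw [hAdef, List.length_take]; omega
  have hRlen : 1 ≤ R.length := by rw [hRdef, List.length_drop]; omega
  have hRhd : R.getD 0 false = true := by
    have h2' := h2
    conv_lhs at h2' => rw [hsplit]
    rw [List.getD_append_right _ _ _ _ (by omega),
      show p + 1 - A.length = 0 from by omega] at h2'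
    exact h2'
  have hcnt1 : P.count true = A.count true + R.count true := by
    conv_lhs => rw [hsplit]
    simp [List.count_append]
  have hcnt2 : P.count false = A.count false + R.count false := by
    conv_lhs => rw [hsplit]
    simp [List.count_append]
  have hctP := hP.1
  have hex : ∃ k, (R.take (k + 1)).count true < (R.take (k + 1)).count false := by
    refine ⟨R.length - 1, ?_⟩
    rw [show R.length - 1 + 1 = R.length from by omega, List.take_length]
    omega
  set k := Nat.find hex with hkdef
  have hk2 := Nat.find_spec hex
  rw [← hkdef] at hk2
  have hmin : ∀ m, m < k → (R.take (m + 1)).count false ≤ (R.take (m + 1)).count true := by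
    intro m hmk
    have h := Nat.find_min hex hmk
    omega
  have hk1 : 1 ≤ k := by
    by_contra h
    have hk0 : k = 0 := by omega
    rw [hk0] at hk2
    have hk2' : (R.take 1).count true < (R.take 1).count false := by simpa using hk2
    rw [take_one_of_head hRhd] at hk2'
    simp at hk2'
  have e1 := count_take_succ R true k
  have e2 := count_take_succ R false k
  have hprev := hmin (k - 1) (by omega)
  rw [show k - 1 + 1 = k from by omega] at hprev
  have hgk : R.getD k false = false ∧ k < R.length := by
    by_cases hidx : k < R.length
    · refine ⟨?_, hidx⟩
      cases hx : R.getD k false with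
      | false => rfl
      | true =>
        exfalso
        have hxx : R.getD k true = R.getD k false := getD_eq_getD R hidx _ _
        rw [hx] at hxx
        rw [if_pos ⟨hxx, hidx⟩] at e1
        rw [if_neg (by rw [hx]; simp)] at e2
        omega
    · exfalso
      rw [if_neg (fun hc => hidx hc.2)] at e1
      rw [if_neg (fun hc => hidx hc.2)] at e2
      have htk : R.take (k + 1) = R.take k := by
        rw [List.take_of_length_le (by omega), List.take_of_length_le (by omega)]
      rw [htk] at hk2
      omega
  have hbalk : (R.take k).count true = (R.take k).count false := by
    have hxx : ¬ (R.getD k true = true ∧ k < R.length) := by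
      intro hc
      have := getD_eq_getD R hgk.2 true false
      rw [hc.1, hgk.1] at this
      simp at this
    rw [if_neg hxx] at e1
    rw [if_pos ⟨hgk.1, hgk.2⟩] at e2
    omega
  set B := R.take k with hBdef
  set C := R.drop (k + 1) with hCdef
  have hRsplit : R = B ++ false :: C := split_at_false hgk.1 hgk.2
  have hBlen : B.length = k := by rw [hBdef, List.length_take]; omega
  have hBne : B ≠ [] := by
    intro h
    rw [h] at hBlen
    simp at hBlen
    omega
  have hBdyck : IsDyck B := by
    refine ⟨hbalk, ?_⟩
    intro m
    rw [hBdef, List.take_take]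
    rcases le_or_gt k m with h | h
    · rw [min_eq_right h, ← hBdef]
      omega
    · rw [min_eq_left (by omega)]
      rcases Nat.eq_zero_or_pos m with rfl | hm
      · simp
      · have := hmin (m - 1) (by omega)
        rw [show m - 1 + 1 = m from by omega] at this
        omega
  have hPform : P = A ++ (B ++ false :: C) := by
    rw [hsplit, hRsplit]
  have hstep : TamariStep (A ++ false :: (B ++ C)) P :=
    ⟨A, B, C, hBdyck, hBne, rfl, hPform⟩
  have hlast : A.getD (A.length - 1) false = false := by
    rw [hAlen, show p + 1 - 1 = p from rfl, hAdef]
    rw [getD_take (by omega) (by omega)]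
    exact h1
  refine ⟨A ++ false :: (B ++ C), hstep, ?_, ?_, ?_, ?_⟩
  · exact (step_dyck hBdyck).mpr (by rw [← hPform]; exact hP)
  · rw [← step_typeWord_eq hBdyck hBne hlast, ← hPform]
  · have := step_mu (A := A) (C := C) hBdyck hBne
    have hc := dyck_ct_pos hBdyck hBne
    rw [← hPform] at this
    omega
  · have := stepCountEq hstep true
    omega

/-! ### Climbing to the top and bottom of a fiber -/

lemma ne_nil_of_ct {P : List Bool} {n : ℕ} (h : P.count true = n + 1) : P ≠ [] := by
  intro hnil
  rw [hnil] at h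
  simp at h

lemma climb_up (v : List Bool) : ∀ (M : ℕ) (P : List Bool), IsDyck P →
    P.count true = v.length + 1 → typeWord P = v →
    P.length * P.length + 1 - mu P ≤ M → TamariLe P (mkB 0 v) := by
  intro M
  induction M with
  | zero =>
    intro P hP hct htw hM
    have := mu_le P
    omega
  | succ M ih =>
    intro P hP hct htw hM
    by_cases hPb : P = mkB 0 v
    · rw [hPb]
      exact Relation.ReflTransGen.refl
    · have hDDU : DDU P := by
        by_contra hd
        exact hPb (uniq_b v 0 P (by rw [← isDyck_iff_tail]; exact hP) hct
          (dyck_head hP (ne_nil_of_ct hct)) htw hd)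
      obtain ⟨p, h1, h2, h3⟩ := hDDU
      obtain ⟨Q, hstep, hQd, hQtw, hmu, hQct⟩ := up_move hP h1 h2 h3
      have hlQ : Q.length = P.length := by
        rw [length_eq_count_add_count, length_eq_count_add_count,
          stepCountEq hstep true, stepCountEq hstep false]
      have hmuQ := mu_le Q
      refine Relation.ReflTransGen.head hstep (ih Q hQd (by omega) (by rw [hQtw, htw]) ?_)
      rw [hlQ]
      rw [hlQ] at hmuQ
      omega

lemma climb_down (v : List Bool) : ∀ (M : ℕ) (P : List Bool), IsDyck P →
    P.count true = v.length + 1 → typeWord P = v →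
    mu P ≤ M → TamariLe (mkA 0 v) P := by
  intro M
  induction M with
  | zero =>
    intro P hP hct htw hM
    by_cases hPa : P = mkA 0 v
    · rw [hPa]
      exact Relation.ReflTransGen.refl
    · exfalso
      have hviol : Viol 0 P := by
        by_contra hvl
        exact hPa (uniq_a v 0 P (by rw [← isDyck_iff_tail]; exact hP) hct
          (dyck_head hP (ne_nil_of_ct hct)) htw hvl)
      obtain ⟨p, h1, h2, h3⟩ := hviol
      obtain ⟨P', hstep, hP'd, hP'tw, hmu, hP'ct⟩ := down_move hP h1 h2 (by omega)
      omega
  | succ M ih =>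
    intro P hP hct htw hM
    by_cases hPa : P = mkA 0 v
    · rw [hPa]
      exact Relation.ReflTransGen.refl
    · have hviol : Viol 0 P := by
        by_contra hvl
        exact hPa (uniq_a v 0 P (by rw [← isDyck_iff_tail]; exact hP) hct
          (dyck_head hP (ne_nil_of_ct hct)) htw hvl)
      obtain ⟨p, h1, h2, h3⟩ := hviol
      obtain ⟨P', hstep, hP'd, hP'tw, hmu, hP'ct⟩ := down_move hP h1 h2 (by omega)
      exact Relation.ReflTransGen.tail
        (ih P' hP'd (by omega) (by rw [hP'tw, htw]) (by omega)) hstep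

end Tam

theorem type_fibers_are_intervals' (n : ℕ) (hn : 1 ≤ n)
    (v : List Bool) (hv : v.length = n - 1) :
    ∃ a b : List Bool, IsDyck a ∧ a.count true = n ∧ IsDyck b ∧ b.count true = n ∧
      TamariLe a b ∧
      ∀ P : List Bool, IsDyck P → P.count true = n →
        (typeWord P = v ↔ (TamariLe a P ∧ TamariLe P b)) := by
  classical
  have hlv : v.length + 1 = n := by omega
  refine ⟨Tam.mkA 0 v, Tam.mkB 0 v, (Tam.isDyck_iff_tail _).mpr (Tam.mkA_tail 0 v),
    by rw [Tam.mkA_ct]; omega, (Tam.isDyck_iff_tail _).mpr (Tam.mkB_tail 0 v),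
    by rw [Tam.mkB_ct]; omega, ?_, ?_⟩
  · exact Tam.climb_up v _ (Tam.mkA 0 v) ((Tam.isDyck_iff_tail _).mpr (Tam.mkA_tail 0 v))
      (Tam.mkA_ct 0 v) (Tam.mkA_typeWord 0 v) le_rfl
  · intro P hP hct
    constructor
    · intro htw
      exact ⟨Tam.climb_down v (Tam.mu P) P hP (by omega) htw le_rfl,
        Tam.climb_up v _ P hP (by omega) htw le_rfl⟩
    · rintro ⟨hle1, hle2⟩
      have hgd : ∀ k, (typeWord P).getD k false = v.getD k false := by
        intro k
        have h1 := Tam.leTwMono hle1 k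
        have h2 := Tam.leTwMono hle2 k
        rw [Tam.mkA_typeWord] at h1
        rw [Tam.mkB_typeWord] at h2
        cases hv1 : v.getD k false with
        | true => exact h1 hv1
        | false =>
          cases hp : (typeWord P).getD k false with
          | false => rfl
          | true =>
            rw [h2 hp] at hv1
            exact absurd hv1 (by simp)
      refine List.ext_getElem ?_ ?_
      · rw [Tam.typeWord_length]
        omega
      · intro k hk1 hk2
        rw [← List.getD_eq_getElem _ false, ← List.getD_eq_getElem _ false]
        exact hgd k


/-- A synchronized interval: a pair of Dyck words of the same size, comparable in the
Tamari order, and with the same type. -/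
def Sync (P Q : List Bool) : Prop :=
  IsDyck P ∧ IsDyck Q ∧ P.length = Q.length ∧ TamariLe P Q ∧ typeWord P = typeWord Q

/-- The Tamari lattice on Dyck paths of size `n` is partitioned by the type function into
fibers `I(v)` which are intervals: for every word `v` of length `n - 1` there are Dyck
paths `a ≤ b` of size `n` such that the Dyck paths of type `v` are exactly those between
`a` and `b`. -/
theorem type_fibers_are_intervals (n : ℕ) (hn : 1 ≤ n)
    (v : List Bool) (hv : v.length = n - 1) :
    ∃ a b : List Bool, IsDyck a ∧ a.count true = n ∧ IsDyck b ∧ b.count true = n ∧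
      TamariLe a b ∧
      ∀ P : List Bool, IsDyck P → P.count true = n →
        (typeWord P = v ↔ (TamariLe a P ∧ TamariLe P b)) := by
  exact type_fibers_are_intervals' n hn v hv
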